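/- Let p be a prime, n ≥ 1, and let Σ be the subgroup of GL₂(ℤ/pⁿℤ) generated by ρ = diag(λ₁, λ₂) (with λᵢ units, order of ρ coprime to p) and a cyclic p-group N of strictly lower triangular unipotent matrices normalized by ρ. Then N is the unique p-Sylow subgroup of Σ, and H¹_loc(Σ, (ℤ/pⁿℤ)²) = 0. -/

import Mathlib

/-- If `Σ` is generated by a diagonal `ρ` of order coprime to `p` and a cyclic `p`-group
`N` of strictly lower triangular unipotent matrices normalized by `ρ`, then `N` is the
unique `p`-Sylow subgroup of `Σ` and `H¹_loc(Σ, (ℤ/pⁿℤ)²) = 0`. -/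
theorem stmt_16 (p : ℕ) (hp : p.Prime) (n : ℕ) (hn : 1 ≤ n)
    (lam1 lam2 : ZMod (p ^ n)) (h1 : IsUnit lam1) (h2 : IsUnit lam2)
    (rho : GL (Fin 2) (ZMod (p ^ n)))
    (hrho : (rho : Matrix (Fin 2) (Fin 2) (ZMod (p ^ n))) = !![lam1, 0; 0, lam2])
    (hord : Nat.Coprime (orderOf rho) p)
    (N : Subgroup (GL (Fin 2) (ZMod (p ^ n))))
    (hNlow : ∀ A ∈ N, (A : Matrix (Fin 2) (Fin 2) (ZMod (p ^ n))) 0 0 = 1 ∧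
      (A : Matrix (Fin 2) (Fin 2) (ZMod (p ^ n))) 1 1 = 1 ∧
      (A : Matrix (Fin 2) (Fin 2) (ZMod (p ^ n))) 0 1 = 0)
    (hNcyc : IsCyclic ↥N) (hNp : IsPGroup p ↥N)
    (hnorm : ∀ h ∈ N, rho * h * rho⁻¹ ∈ N)
    (S : Subgroup (GL (Fin 2) (ZMod (p ^ n))))
    (hS : S = Subgroup.closure (insert rho (N : Set (GL (Fin 2) (ZMod (p ^ n)))))) :
    (N ≤ S ∧ ∀ Q : Subgroup (GL (Fin 2) (ZMod (p ^ n))),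
        Q ≤ S → IsPGroup p ↥Q → Q ≤ N) ∧
    (∀ Z : GL (Fin 2) (ZMod (p ^ n)) → (Fin 2 → ZMod (p ^ n)),
      (∀ σ ∈ S, ∀ τ ∈ S, Z (σ * τ) = Z σ +
        (σ : Matrix (Fin 2) (Fin 2) (ZMod (p ^ n))).mulVec (Z τ)) →
      (∀ σ ∈ S, ∃ W : Fin 2 → ZMod (p ^ n),
        Z σ = (σ : Matrix (Fin 2) (Fin 2) (ZMod (p ^ n))).mulVec W - W) →
      ∃ P : Fin 2 → ZMod (p ^ n), ∀ σ ∈ S,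
        Z σ = (σ : Matrix (Fin 2) (Fin 2) (ZMod (p ^ n))).mulVec P - P) := by
  subst hS
  set S := Subgroup.closure (insert rho (N : Set (GL (Fin 2) (ZMod (p ^ n))))) with hSdef
  set m := orderOf rho with hmdef
  -- order of rho is positive
  have hm0 : m ≠ 0 := fun h =>
    hp.one_lt.ne' (Nat.coprime_zero_left p |>.mp (h ▸ hord))
  obtain ⟨m', hm'⟩ : ∃ m', m = m' + 1 := ⟨m - 1, (Nat.succ_pred_eq_of_pos (Nat.pos_of_ne_zero hm0)).symm⟩
  have hrm : rho ^ m = 1 := pow_orderOf_eq_one rho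
  -- conjugation by powers of rho preserves N
  have hconj : ∀ (j : ℕ) (h : GL (Fin 2) (ZMod (p ^ n))), h ∈ N → rho ^ j * h * (rho ^ j)⁻¹ ∈ N := by
    intro j
    induction j with
    | zero => intro h hh; simpa using hh
    | succ j ih =>
      intro h hh
      have key := hnorm _ (ih h hh)
      have e : rho ^ (j + 1) * h * (rho ^ (j + 1))⁻¹
          = rho * (rho ^ j * h * (rho ^ j)⁻¹) * rho⁻¹ := by
        rw [pow_succ']
        group
      rw [e]; exact key
  have hpowinv : ∀ i : ℕ, (rho ^ i)⁻¹ = rho ^ (i * m') := by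
    intro i
    have key : rho ^ i * rho ^ (i * m') = 1 := by
      rw [← pow_add]
      have e : i + i * m' = m * i := by rw [hm']; ring
      rw [e, pow_mul, hrm, one_pow]
    exact inv_eq_of_mul_eq_one_right key
  have hconj' : ∀ (i : ℕ) (h : GL (Fin 2) (ZMod (p ^ n))), h ∈ N → (rho ^ i)⁻¹ * h * rho ^ i ∈ N := by
    intro i h hh
    have key := hconj (i * m') h hh
    rw [← hpowinv i, inv_inv] at key
    exact key
  -- membership in S
  have hrhoS : rho ∈ S := Subgroup.subset_closure (Set.mem_insert _ _)
  have hNS : N ≤ S := fun x hx => Subgroup.subset_closure (Set.mem_insert_of_mem _ hx)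
  -- every element of S has the shape g * rho ^ j with g ∈ N
  have hrep : ∀ x ∈ S, ∃ g ∈ N, ∃ j : ℕ, x = g * rho ^ j := by
    intro x hx
    induction hx using Subgroup.closure_induction with
    | mem x hx =>
      rcases Set.mem_insert_iff.mp hx with h | h
      · exact ⟨1, one_mem N, 1, by rw [h, one_mul, pow_one]⟩
      · exact ⟨x, h, 0, by rw [pow_zero, mul_one]⟩
    | one => exact ⟨1, one_mem N, 0, by simp⟩
    | mul x y hx hy ihx ihy =>
      obtain ⟨g, hg, i, rfl⟩ := ihx
      obtain ⟨h, hh, j, rfl⟩ := ihy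
      refine ⟨g * (rho ^ i * h * (rho ^ i)⁻¹), mul_mem hg (hconj i h hh), i + j, ?_⟩
      rw [pow_add]; group
    | inv x hx ihx =>
      obtain ⟨g, hg, i, rfl⟩ := ihx
      refine ⟨(rho ^ i)⁻¹ * g⁻¹ * rho ^ i, hconj' i g⁻¹ (inv_mem hg), i * m', ?_⟩
      rw [← hpowinv i]; group
  constructor
  · -- Sylow part
    refine ⟨hNS, ?_⟩
    intro Q hQS hQp q hq
    obtain ⟨g, hg, j, hxe⟩ := hrep q (hQS hq)
    obtain ⟨k, hk⟩ := hQp ⟨q, hq⟩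
    have hk' : q ^ p ^ k = 1 := by
      have := congrArg (Subtype.val) hk
      simpa using this
    have hqm : ∀ c : ℕ, ∃ g' ∈ N, q ^ c = g' * rho ^ (j * c) := by
      intro c
      induction c with
      | zero => exact ⟨1, one_mem N, by simp⟩
      | succ c ih =>
        obtain ⟨g', hg', he⟩ := ih
        refine ⟨g' * (rho ^ (j * c) * g * (rho ^ (j * c))⁻¹),
          mul_mem hg' (hconj _ _ hg), ?_⟩
        rw [pow_succ, he, hxe, Nat.mul_succ, pow_add]
        group
    obtain ⟨g', hg', he⟩ := hqm m
    have hqmN : q ^ m ∈ N := by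
      have e : rho ^ (j * m) = 1 := by
        rw [Nat.mul_comm, pow_mul, hrm, one_pow]
      rw [he, e, mul_one]
      exact hg'
    have ho : orderOf q ∣ p ^ k := orderOf_dvd_of_pow_eq_one hk'
    by_cases h1' : orderOf q = 1
    · have : q = 1 := orderOf_eq_one_iff.mp h1'
      rw [this]; exact one_mem N
    · have h0 : orderOf q ≠ 0 := by
        intro h
        rw [h] at ho
        exact pow_ne_zero k hp.pos.ne' (Nat.eq_zero_of_zero_dvd ho)
      have hopos : 1 < orderOf q := by omega
      have hcop : Nat.Coprime m (orderOf q) :=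
        Nat.Coprime.coprime_dvd_right ho (hord.pow_right k)
      obtain ⟨u, -, hu⟩ := Nat.exists_mul_mod_eq_one_of_coprime hcop hopos
      have hqq : q ^ (m * u) = q := by
        conv_lhs => rw [← pow_mod_orderOf]
        rw [hu, pow_one]
      rw [← hqq, pow_mul]
      exact pow_mem hqmN u
  · -- cohomology part
    intro Z hZ hls
    obtain ⟨g₀, hg₀⟩ := hNcyc.exists_generator
    have hgN : (g₀ : GL (Fin 2) (ZMod (p ^ n))) ∈ N := g₀.2
    have hgS : (g₀ : GL (Fin 2) (ZMod (p ^ n))) ∈ S := hNS hgN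
    set g : GL (Fin 2) (ZMod (p ^ n)) := (g₀ : GL (Fin 2) (ZMod (p ^ n))) with hgdef
    -- Z 1 = 0
    have Z1 : Z 1 = 0 := by
      have h := hZ 1 (one_mem _) 1 (one_mem _)
      simp only [mul_one, Units.val_one, Matrix.one_mulVec] at h
      exact (left_eq_add.mp h)
    obtain ⟨W, hW⟩ := hls g hgS
    -- Z on powers of g
    have hgc : ∀ c : ℕ, Z (g ^ c) =
        ((g ^ c : GL (Fin 2) (ZMod (p ^ n))) : Matrix (Fin 2) (Fin 2) (ZMod (p ^ n))).mulVec W - W := by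
      intro c
      induction c with
      | zero => simp [Z1]
      | succ c ih =>
        have h := hZ (g ^ c) (pow_mem hgS c) g hgS
        rw [← pow_succ] at h
        rw [h, ih, hW]
        have hcoe : ((g ^ (c + 1) : GL (Fin 2) (ZMod (p ^ n))) : Matrix (Fin 2) (Fin 2) (ZMod (p ^ n)))
            = ((g ^ c : GL (Fin 2) (ZMod (p ^ n))) : Matrix (Fin 2) (Fin 2) (ZMod (p ^ n)))
              * ((g : GL (Fin 2) (ZMod (p ^ n))) : Matrix (Fin 2) (Fin 2) (ZMod (p ^ n))) := by
          rw [pow_succ, Units.val_mul]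
        rw [hcoe, Matrix.mulVec_sub, Matrix.mulVec_mulVec]
        abel
    -- g has finite order
    have hgfin : orderOf g ≠ 0 := by
      obtain ⟨k, hk⟩ := hNp g₀
      have hk' : g ^ p ^ k = 1 := by
        have := congrArg (Subtype.val) hk
        simpa using this
      intro h
      have := orderOf_dvd_of_pow_eq_one hk'
      rw [h] at this
      exact pow_ne_zero k hp.pos.ne' (Nat.eq_zero_of_zero_dvd this)
    -- every element of N is a natural power of g
    have hτpow : ∀ τ ∈ N, ∃ c : ℕ, τ = g ^ c := by
      intro τ hτ
      obtain ⟨z, hz⟩ := Subgroup.mem_zpowers_iff.mp (hg₀ ⟨τ, hτ⟩)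
      have hτz : τ = g ^ z := by
        have := congrArg (Subtype.val) hz
        simpa [SubgroupClass.coe_zpow] using this.symm
      refine ⟨(z % (orderOf g : ℤ)).toNat, ?_⟩
      rw [hτz, ← zpow_mod_orderOf,
        ← Int.toNat_of_nonneg (Int.emod_nonneg z (by exact_mod_cast hgfin)), zpow_natCast]
      rw [Int.toNat_of_nonneg (Int.emod_nonneg z (by exact_mod_cast hgfin))]
    have hτN : ∀ τ ∈ N, Z τ =
        ((τ : GL (Fin 2) (ZMod (p ^ n))) : Matrix (Fin 2) (Fin 2) (ZMod (p ^ n))).mulVec W - W := by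
      intro τ hτ
      obtain ⟨c, rfl⟩ := hτpow τ hτ
      exact hgc c
    -- the shifted cocycle
    set Z' : GL (Fin 2) (ZMod (p ^ n)) → (Fin 2 → ZMod (p ^ n)) :=
      fun σ => Z σ - (((σ : GL (Fin 2) (ZMod (p ^ n))) : Matrix (Fin 2) (Fin 2) (ZMod (p ^ n))).mulVec W - W)
      with hZ'def
    have hZ'coc : ∀ σ ∈ S, ∀ τ ∈ S, Z' (σ * τ) = Z' σ +
        ((σ : GL (Fin 2) (ZMod (p ^ n))) : Matrix (Fin 2) (Fin 2) (ZMod (p ^ n))).mulVec (Z' τ) := by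
      intro σ hσ τ hτ
      simp only [hZ'def]
      rw [hZ σ hσ τ hτ, Units.val_mul, Matrix.mulVec_sub, Matrix.mulVec_sub,
        Matrix.mulVec_mulVec]
      abel
    have hZ'N : ∀ τ ∈ N, Z' τ = 0 := by
      intro τ hτ
      simp only [hZ'def]
      rw [hτN τ hτ]
      abel
    have hcoset : ∀ σ ∈ S, ∀ τ ∈ N, Z' (σ * τ) = Z' σ := by
      intro σ hσ τ hτ
      rw [hZ'coc σ hσ τ (hNS hτ), hZ'N τ hτ, Matrix.mulVec_zero, add_zero]
    have hperiod : ∀ i : ℕ, Z' (rho ^ (i + m)) = Z' (rho ^ i) := by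
      intro i
      rw [pow_add, hrm, mul_one]
    -- the average
    set T : Fin 2 → ZMod (p ^ n) := ∑ k ∈ Finset.range m, Z' (rho ^ k) with hTdef
    have hshift : ∀ j : ℕ, ∑ k ∈ Finset.range m, Z' (rho ^ (j + k)) = T := by
      intro j
      induction j with
      | zero => simp [hTdef]
      | succ j ih =>
        rw [← ih]
        rw [hm', Finset.sum_range_succ, Finset.sum_range_succ']
        have e1 : ∀ k, j + 1 + k = j + (k + 1) := by intro k; ring
        have e2 : j + 1 + m' = j + m := by rw [hm']; ring
        have e3 : Z' (rho ^ (j + 1 + m')) = Z' (rho ^ (j + 0)) := by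
          rw [e2, hperiod, add_zero]
        rw [e3]
        congr 1
        apply Finset.sum_congr rfl
        intro k _
        rw [e1]
    -- Z' on cosets of powers of rho
    have hNrho : ∀ g' ∈ N, ∀ i : ℕ, Z' (g' * rho ^ i) = Z' (rho ^ i) := by
      intro g' hg' i
      have hτ : (rho ^ i)⁻¹ * g' * rho ^ i ∈ N := hconj' i g' hg'
      have e : g' * rho ^ i = rho ^ i * ((rho ^ i)⁻¹ * g' * rho ^ i) := by group
      rw [e, hcoset (rho ^ i) (pow_mem hrhoS i) _ hτ]
    -- key averaging identity
    have hmain : ∀ σ ∈ S, ((m : ZMod (p ^ n))) • Z' σ =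
        T - ((σ : GL (Fin 2) (ZMod (p ^ n))) : Matrix (Fin 2) (Fin 2) (ZMod (p ^ n))).mulVec T := by
      intro σ hσ
      have hA : ∑ k ∈ Finset.range m, Z' (σ * rho ^ k) = T := by
        obtain ⟨g', hg', j, rfl⟩ := hrep σ hσ
        calc ∑ k ∈ Finset.range m, Z' (g' * rho ^ j * rho ^ k)
            = ∑ k ∈ Finset.range m, Z' (rho ^ (j + k)) := by
              apply Finset.sum_congr rfl
              intro k _
              rw [mul_assoc, ← pow_add, hNrho g' hg' (j + k)]
          _ = T := hshift j
      have hB : ∑ k ∈ Finset.range m, Z' (σ * rho ^ k)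
          = (m : ZMod (p ^ n)) • Z' σ
            + ((σ : GL (Fin 2) (ZMod (p ^ n))) : Matrix (Fin 2) (Fin 2) (ZMod (p ^ n))).mulVec T := by
        have e1 : ∀ k ∈ Finset.range m, Z' (σ * rho ^ k) = Z' σ +
            ((σ : GL (Fin 2) (ZMod (p ^ n))) : Matrix (Fin 2) (Fin 2) (ZMod (p ^ n))).mulVec (Z' (rho ^ k)) := by
          intro k _
          exact hZ'coc σ hσ (rho ^ k) (pow_mem hrhoS k)
        rw [Finset.sum_congr rfl e1, Finset.sum_add_distrib, Finset.sum_const,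
          Finset.card_range, hTdef]
        congr 1
        · rw [← Nat.cast_smul_eq_nsmul (ZMod (p ^ n))]
        · exact (map_sum (Matrix.mulVecLin ((σ : GL (Fin 2) (ZMod (p ^ n))) : Matrix (Fin 2) (Fin 2) (ZMod (p ^ n))))
            (fun k => Z' (rho ^ k)) (Finset.range m)).symm
      rw [hA] at hB
      exact eq_sub_of_add_eq hB.symm
    -- m is invertible mod p^n
    haveI : NeZero (p ^ n) := ⟨pow_ne_zero n hp.pos.ne'⟩
    have hcop : Nat.Coprime m (p ^ n) := hord.pow_right n
    have hum : IsUnit ((m : ZMod (p ^ n))) := (ZMod.isUnit_iff_coprime m (p ^ n)).mpr hcop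
    obtain ⟨u, hu⟩ := hum
    set c : ZMod (p ^ n) := ((u⁻¹ : (ZMod (p ^ n))ˣ) : ZMod (p ^ n)) with hcdef
    have hcm : c * (m : ZMod (p ^ n)) = 1 := by
      rw [hcdef, ← hu]
      exact_mod_cast u.inv_mul
    refine ⟨-(c • T) + W, ?_⟩
    intro σ hσ
    have hZ'σ : Z' σ =
        ((σ : GL (Fin 2) (ZMod (p ^ n))) : Matrix (Fin 2) (Fin 2) (ZMod (p ^ n))).mulVec (-(c • T)) - (-(c • T)) := by
      have h := hmain σ hσ
      calc Z' σ = (c * (m : ZMod (p ^ n))) • Z' σ := by rw [hcm, one_smul]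
        _ = c • ((m : ZMod (p ^ n)) • Z' σ) := by rw [mul_smul]
        _ = c • (T - ((σ : GL (Fin 2) (ZMod (p ^ n))) : Matrix (Fin 2) (Fin 2) (ZMod (p ^ n))).mulVec T) := by rw [h]
        _ = c • T - c • ((σ : GL (Fin 2) (ZMod (p ^ n))) : Matrix (Fin 2) (Fin 2) (ZMod (p ^ n))).mulVec T := by
              rw [smul_sub]
        _ = ((σ : GL (Fin 2) (ZMod (p ^ n))) : Matrix (Fin 2) (Fin 2) (ZMod (p ^ n))).mulVec (-(c • T)) - (-(c • T)) := by
              rw [Matrix.mulVec_neg, Matrix.mulVec_smul]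
              abel
    have hZσ : Z σ = Z' σ +
        (((σ : GL (Fin 2) (ZMod (p ^ n))) : Matrix (Fin 2) (Fin 2) (ZMod (p ^ n))).mulVec W - W) := by
      simp only [hZ'def, sub_add_cancel]
    rw [hZσ, hZ'σ, Matrix.mulVec_add]
    abel
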